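/- For α ∈ [1,5], define f_α on real triples a ≤ b ≤ c by f_α = λ_− + (α−1)a if α ∈ [1,2); λ_− + a + (α−2)b if α ∈ [2,3); λ_− + a + b + (α−3)c if α ∈ [3,4); λ_− + a + b + c + (α−4)λ_+ if α ∈ [4,5], where λ_± = (a+b+c)/3 ± (√2/3)√(3(a²+b²+c²)−(a+b+c)²). Then along any solution of a' = a²+bc, b' = b²+ac, c' = c²+ab with S = 2(a+b+c) > 0, if f_α ≥ γ·S at time 0 for some real γ, then f_α ≥ γ·S for all t ∈ [0,T). -/

import Mathlib

private lemma monoIco {T : ℝ} {f f' : ℝ → ℝ}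
    (h : ∀ s ∈ Set.Ico (0:ℝ) T, HasDerivAt f (f' s) s)
    (h' : ∀ s ∈ Set.Ico (0:ℝ) T, 0 ≤ f' s) :
    MonotoneOn f (Set.Ico (0:ℝ) T) := by
  apply monotoneOn_of_deriv_nonneg (convex_Ico 0 T)
  · exact fun s hs => (h s hs).continuousAt.continuousWithinAt
  · rw [interior_Ico]
    exact fun s hs =>
      (h s (Set.Ioo_subset_Ico_self hs)).differentiableAt.differentiableWithinAt
  · rw [interior_Ico]
    intro s hs
    rw [(h s (Set.Ioo_subset_Ico_self hs)).deriv]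
    exact h' s (Set.Ioo_subset_Ico_self hs)

private lemma antIco {T : ℝ} {f f' : ℝ → ℝ}
    (h : ∀ s ∈ Set.Ico (0:ℝ) T, HasDerivAt f (f' s) s)
    (h' : ∀ s ∈ Set.Ico (0:ℝ) T, f' s ≤ 0) :
    AntitoneOn f (Set.Ico (0:ℝ) T) := by
  apply antitoneOn_of_deriv_nonpos (convex_Ico 0 T)
  · exact fun s hs => (h s hs).continuousAt.continuousWithinAt
  · rw [interior_Ico]
    exact fun s hs =>
      (h s (Set.Ioo_subset_Ico_self hs)).differentiableAt.differentiableWithinAt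
  · rw [interior_Ico]
    intro s hs
    rw [(h s (Set.Ioo_subset_Ico_self hs)).deriv]
    exact h' s (Set.Ioo_subset_Ico_self hs)

private lemma Qnn (x y z : ℝ) : 0 ≤ 3 * (x^2 + y^2 + z^2) - (x + y + z)^2 := by
  nlinarith [sq_nonneg (x - y), sq_nonneg (y - z), sq_nonneg (x - z)]

private lemma sqrtQ_div {x y z : ℝ} (hu : 0 < x + y + z) :
    Real.sqrt ((3 * (x^2 + y^2 + z^2) - (x + y + z)^2) / (x + y + z)^2)
      = Real.sqrt (3 * (x^2 + y^2 + z^2) - (x + y + z)^2) / (x + y + z) := by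
  rw [Real.sqrt_div (Qnn x y z), Real.sqrt_sq hu.le]



/-- The smallest eigenvalue `λ₋` of the 3D curvature operator of the second kind. -/
noncomputable def lamMinus (a b c : ℝ) : ℝ :=
  (a + b + c) / 3 - Real.sqrt 2 / 3 * Real.sqrt (3 * (a^2 + b^2 + c^2) - (a + b + c)^2)

/-- The largest eigenvalue `λ₊` of the 3D curvature operator of the second kind. -/
noncomputable def lamPlus (a b c : ℝ) : ℝ :=
  (a + b + c) / 3 + Real.sqrt 2 / 3 * Real.sqrt (3 * (a^2 + b^2 + c^2) - (a + b + c)^2)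

/-- `f_α`, measuring `α`-nonnegativity of the curvature operator of the second kind. -/
noncomputable def fAlpha (α a b c : ℝ) : ℝ :=
  if α < 2 then lamMinus a b c + (α - 1) * a
  else if α < 3 then lamMinus a b c + a + (α - 2) * b
  else if α < 4 then lamMinus a b c + a + b + (α - 3) * c
  else lamMinus a b c + a + b + c + (α - 4) * lamPlus a b c

private lemma lamMinus_div {x y z : ℝ} (hu : 0 < x + y + z) :
    lamMinus x y z / (x + y + z)
      = 1/3 - Real.sqrt 2 / 3 *
          Real.sqrt ((3 * (x^2 + y^2 + z^2) - (x + y + z)^2) / (x + y + z)^2) := by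
  rw [sqrtQ_div hu]
  unfold lamMinus
  have h0 : x + y + z ≠ 0 := hu.ne'
  field_simp

private lemma lamPlus_div {x y z : ℝ} (hu : 0 < x + y + z) :
    lamPlus x y z / (x + y + z)
      = 1/3 + Real.sqrt 2 / 3 *
          Real.sqrt ((3 * (x^2 + y^2 + z^2) - (x + y + z)^2) / (x + y + z)^2) := by
  rw [sqrtQ_div hu]
  unfold lamPlus
  have h0 : x + y + z ≠ 0 := hu.ne'
  field_simp

theorem stmt17 (α : ℝ) (hα : α ∈ Set.Icc (1:ℝ) 5) (γ : ℝ) (a b c : ℝ → ℝ) (T : ℝ)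
    (hT : 0 < T)
    (ha : ∀ t ∈ Set.Ico (0:ℝ) T, HasDerivAt a ((a t)^2 + b t * c t) t)
    (hb : ∀ t ∈ Set.Ico (0:ℝ) T, HasDerivAt b ((b t)^2 + a t * c t) t)
    (hc : ∀ t ∈ Set.Ico (0:ℝ) T, HasDerivAt c ((c t)^2 + a t * b t) t)
    (hord : ∀ t ∈ Set.Ico (0:ℝ) T, a t ≤ b t ∧ b t ≤ c t)
    (hS : ∀ t ∈ Set.Ico (0:ℝ) T, 0 < 2 * (a t + b t + c t))
    (h0 : fAlpha α (a 0) (b 0) (c 0) ≥ γ * (2 * (a 0 + b 0 + c 0))) :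
    ∀ t ∈ Set.Ico (0:ℝ) T,
      fAlpha α (a t) (b t) (c t) ≥ γ * (2 * (a t + b t + c t)) := by
  intro t ht
  have h0mem : (0:ℝ) ∈ Set.Ico (0:ℝ) T := ⟨le_rfl, hT⟩
  have hU : ∀ s ∈ Set.Ico (0:ℝ) T, 0 < a s + b s + c s := fun s hs => by
    have := hS s hs; linarith
  -- derivative of U = a + b + c
  have hUd : ∀ s ∈ Set.Ico (0:ℝ) T, HasDerivAt (fun τ => a τ + b τ + c τ)
      ((a s)^2 + (b s)^2 + (c s)^2 + a s * b s + b s * c s + a s * c s) s := by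
    intro s hs
    have h := ((ha s hs).add (hb s hs)).add (hc s hs)
    exact h.congr_deriv (by ring)
  -- p1 = a / U is monotone
  have hp1 : MonotoneOn (fun τ => a τ / (a τ + b τ + c τ)) (Set.Ico (0:ℝ) T) := by
    apply monoIco (f' := fun s =>
      (((a s)^2 + b s * c s) * (a s + b s + c s)
        - a s * ((a s)^2 + (b s)^2 + (c s)^2 + a s * b s + b s * c s + a s * c s))
        / (a s + b s + c s)^2)
    · intro s hs
      exact (ha s hs).div (hUd s hs) (hU s hs).ne'
    · intro s hs
      obtain ⟨h1, h2⟩ := hord s hs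
      apply div_nonneg _ (sq_nonneg _)
      nlinarith [mul_nonneg (sq_nonneg (b s)) (sub_nonneg.2 (h1.trans h2)),
        mul_nonneg (sq_nonneg (c s)) (sub_nonneg.2 h1)]
  -- p2 = (a + b) / U is monotone
  have hp2 : MonotoneOn (fun τ => (a τ + b τ) / (a τ + b τ + c τ)) (Set.Ico (0:ℝ) T) := by
    apply monoIco (f' := fun s =>
      ((((a s)^2 + b s * c s) + ((b s)^2 + a s * c s)) * (a s + b s + c s)
        - (a s + b s) * ((a s)^2 + (b s)^2 + (c s)^2 + a s * b s + b s * c s + a s * c s))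
        / (a s + b s + c s)^2)
    · intro s hs
      exact ((ha s hs).add (hb s hs)).div (hUd s hs) (hU s hs).ne'
    · intro s hs
      obtain ⟨h1, h2⟩ := hord s hs
      apply div_nonneg _ (sq_nonneg _)
      nlinarith [mul_nonneg (sq_nonneg (b s)) (sub_nonneg.2 (h1.trans h2)),
        mul_nonneg (sq_nonneg (a s)) (sub_nonneg.2 h2)]
  -- p3 = c / U is antitone
  have hp3 : AntitoneOn (fun τ => c τ / (a τ + b τ + c τ)) (Set.Ico (0:ℝ) T) := by
    apply antIco (f' := fun s =>
      (((c s)^2 + a s * b s) * (a s + b s + c s)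
        - c s * ((a s)^2 + (b s)^2 + (c s)^2 + a s * b s + b s * c s + a s * c s))
        / (a s + b s + c s)^2)
    · intro s hs
      exact (hc s hs).div (hUd s hs) (hU s hs).ne'
    · intro s hs
      obtain ⟨h1, h2⟩ := hord s hs
      apply div_nonpos_of_nonpos_of_nonneg _ (sq_nonneg _)
      nlinarith [mul_nonneg (sq_nonneg (b s)) (sub_nonneg.2 (h1.trans h2)),
        mul_nonneg (sq_nonneg (a s)) (sub_nonneg.2 h2)]
  -- r = Q / U^2 is antitone
  have hr : AntitoneOn
      (fun τ => (3 * ((a τ)^2 + (b τ)^2 + (c τ)^2) - (a τ + b τ + c τ)^2)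
        / (a τ + b τ + c τ)^2) (Set.Ico (0:ℝ) T) := by
    apply antIco (f' := fun s =>
      ((6 * (a s * ((a s)^2 + b s * c s) + b s * ((b s)^2 + a s * c s)
            + c s * ((c s)^2 + a s * b s))
          - 2 * (a s + b s + c s)
            * ((a s)^2 + (b s)^2 + (c s)^2 + a s * b s + b s * c s + a s * c s))
          * (a s + b s + c s)^2
        - (3 * ((a s)^2 + (b s)^2 + (c s)^2) - (a s + b s + c s)^2)
          * (2 * (a s + b s + c s)^1
            * ((a s)^2 + (b s)^2 + (c s)^2 + a s * b s + b s * c s + a s * c s)))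
        / ((a s + b s + c s)^2)^2)
    · intro s hs
      have hUne : a s + b s + c s ≠ 0 := (hU s hs).ne'
      have hsa := (ha s hs).pow 2
      have hsb := (hb s hs).pow 2
      have hsc := (hc s hs).pow 2
      have hnum : HasDerivAt
          (fun τ => 3 * ((a τ)^2 + (b τ)^2 + (c τ)^2) - (a τ + b τ + c τ)^2)
          (6 * (a s * ((a s)^2 + b s * c s) + b s * ((b s)^2 + a s * c s)
            + c s * ((c s)^2 + a s * b s))
          - 2 * (a s + b s + c s)
            * ((a s)^2 + (b s)^2 + (c s)^2 + a s * b s + b s * c s + a s * c s)) s := by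
        have h := (((hsa.add hsb).add hsc).const_mul 3).sub ((hUd s hs).pow 2)
        exact h.congr_deriv (by ring)
      have hden := (hUd s hs).pow 2
      have h := hnum.div hden (pow_ne_zero 2 hUne)
      exact h.congr_deriv (by simp only [Pi.pow_apply, Nat.cast_ofNat, Nat.add_one_sub_one])
    · intro s hs
      have hUpos := hU s hs
      apply div_nonpos_of_nonpos_of_nonneg _ (sq_nonneg _)
      nlinarith [mul_nonneg hUpos.le (sq_nonneg (a s * b s - b s * c s)),
        mul_nonneg hUpos.le (sq_nonneg (b s * c s - a s * c s)),
        mul_nonneg hUpos.le (sq_nonneg (a s * c s - a s * b s)),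
        mul_nonneg (mul_nonneg hUpos.le hUpos.le) (sq_nonneg (a s * b s - b s * c s)),
        mul_nonneg (mul_nonneg hUpos.le hUpos.le) (sq_nonneg (b s * c s - a s * c s)),
        mul_nonneg (mul_nonneg hUpos.le hUpos.le) (sq_nonneg (a s * c s - a s * b s))]
  -- assemble
  obtain ⟨hα1, hα5⟩ := hα
  have htt : (0:ℝ) ≤ t := ht.1
  have hu0 : 0 < a 0 + b 0 + c 0 := hU 0 h0mem
  have hut : 0 < a t + b t + c t := hU t ht
  have hu0' : a 0 + b 0 + c 0 ≠ 0 := hu0.ne'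
  have hut' : a t + b t + c t ≠ 0 := hut.ne'
  have m1 : a 0 / (a 0 + b 0 + c 0) ≤ a t / (a t + b t + c t) := hp1 h0mem ht htt
  have m2 : (a 0 + b 0) / (a 0 + b 0 + c 0) ≤ (a t + b t) / (a t + b t + c t) :=
    hp2 h0mem ht htt
  have m3 : c t / (a t + b t + c t) ≤ c 0 / (a 0 + b 0 + c 0) := hp3 h0mem ht htt
  have m4 : (3 * ((a t)^2 + (b t)^2 + (c t)^2) - (a t + b t + c t)^2) / (a t + b t + c t)^2
      ≤ (3 * ((a 0)^2 + (b 0)^2 + (c 0)^2) - (a 0 + b 0 + c 0)^2) / (a 0 + b 0 + c 0)^2 :=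
    hr h0mem ht htt
  have m5 : Real.sqrt ((3 * ((a t)^2 + (b t)^2 + (c t)^2) - (a t + b t + c t)^2)
        / (a t + b t + c t)^2)
      ≤ Real.sqrt ((3 * ((a 0)^2 + (b 0)^2 + (c 0)^2) - (a 0 + b 0 + c 0)^2)
        / (a 0 + b 0 + c 0)^2) := Real.sqrt_le_sqrt m4
  have hk : (0:ℝ) ≤ Real.sqrt 2 / 3 := by positivity
  have q2 : Real.sqrt 2 / 3 * Real.sqrt ((3 * ((a t)^2 + (b t)^2 + (c t)^2)
        - (a t + b t + c t)^2) / (a t + b t + c t)^2)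
      ≤ Real.sqrt 2 / 3 * Real.sqrt ((3 * ((a 0)^2 + (b 0)^2 + (c 0)^2)
        - (a 0 + b 0 + c 0)^2) / (a 0 + b 0 + c 0)^2) :=
    mul_le_mul_of_nonneg_left m5 hk
  have key : fAlpha α (a 0) (b 0) (c 0) / (a 0 + b 0 + c 0)
      ≤ fAlpha α (a t) (b t) (c t) / (a t + b t + c t) := by
    unfold fAlpha
    by_cases hc2 : α < 2
    · rw [if_pos hc2, if_pos hc2]
      have e0 : (lamMinus (a 0) (b 0) (c 0) + (α - 1) * a 0) / (a 0 + b 0 + c 0)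
          = lamMinus (a 0) (b 0) (c 0) / (a 0 + b 0 + c 0)
            + (α - 1) * (a 0 / (a 0 + b 0 + c 0)) := by
        field_simp
      have et : (lamMinus (a t) (b t) (c t) + (α - 1) * a t) / (a t + b t + c t)
          = lamMinus (a t) (b t) (c t) / (a t + b t + c t)
            + (α - 1) * (a t / (a t + b t + c t)) := by
        field_simp
      rw [e0, et, lamMinus_div hu0, lamMinus_div hut]
      have q1 : (α - 1) * (a 0 / (a 0 + b 0 + c 0)) ≤ (α - 1) * (a t / (a t + b t + c t)) :=
        mul_le_mul_of_nonneg_left m1 (by linarith)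
      linarith
    · by_cases hc3 : α < 3
      · rw [if_neg hc2, if_pos hc3, if_neg hc2, if_pos hc3]
        have e0 : (lamMinus (a 0) (b 0) (c 0) + a 0 + (α - 2) * b 0) / (a 0 + b 0 + c 0)
            = lamMinus (a 0) (b 0) (c 0) / (a 0 + b 0 + c 0)
              + (3 - α) * (a 0 / (a 0 + b 0 + c 0))
              + (α - 2) * ((a 0 + b 0) / (a 0 + b 0 + c 0)) := by
          field_simp
          ring
        have et : (lamMinus (a t) (b t) (c t) + a t + (α - 2) * b t) / (a t + b t + c t)
            = lamMinus (a t) (b t) (c t) / (a t + b t + c t)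
              + (3 - α) * (a t / (a t + b t + c t))
              + (α - 2) * ((a t + b t) / (a t + b t + c t)) := by
          field_simp
          ring
        rw [e0, et, lamMinus_div hu0, lamMinus_div hut]
        have q1 : (3 - α) * (a 0 / (a 0 + b 0 + c 0)) ≤ (3 - α) * (a t / (a t + b t + c t)) :=
          mul_le_mul_of_nonneg_left m1 (by linarith)
        have q3 : (α - 2) * ((a 0 + b 0) / (a 0 + b 0 + c 0))
            ≤ (α - 2) * ((a t + b t) / (a t + b t + c t)) :=
          mul_le_mul_of_nonneg_left m2 (by linarith)
        linarith
      · by_cases hc4 : α < 4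
        · rw [if_neg hc2, if_neg hc3, if_pos hc4, if_neg hc2, if_neg hc3, if_pos hc4]
          have e0 : (lamMinus (a 0) (b 0) (c 0) + a 0 + b 0 + (α - 3) * c 0)
                / (a 0 + b 0 + c 0)
              = lamMinus (a 0) (b 0) (c 0) / (a 0 + b 0 + c 0) + 1
                + (α - 4) * (c 0 / (a 0 + b 0 + c 0)) := by
            field_simp
            ring
          have et : (lamMinus (a t) (b t) (c t) + a t + b t + (α - 3) * c t)
                / (a t + b t + c t)
              = lamMinus (a t) (b t) (c t) / (a t + b t + c t) + 1
                + (α - 4) * (c t / (a t + b t + c t)) := by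
            field_simp
            ring
          rw [e0, et, lamMinus_div hu0, lamMinus_div hut]
          have q1 : (α - 4) * (c 0 / (a 0 + b 0 + c 0)) ≤ (α - 4) * (c t / (a t + b t + c t)) :=
            mul_le_mul_of_nonpos_left m3 (by linarith)
          linarith
        · rw [if_neg hc2, if_neg hc3, if_neg hc4, if_neg hc2, if_neg hc3, if_neg hc4]
          have e0 : (lamMinus (a 0) (b 0) (c 0) + a 0 + b 0 + c 0
                + (α - 4) * lamPlus (a 0) (b 0) (c 0)) / (a 0 + b 0 + c 0)
              = lamMinus (a 0) (b 0) (c 0) / (a 0 + b 0 + c 0) + 1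
                + (α - 4) * (lamPlus (a 0) (b 0) (c 0) / (a 0 + b 0 + c 0)) := by
            field_simp
            ring
          have et : (lamMinus (a t) (b t) (c t) + a t + b t + c t
                + (α - 4) * lamPlus (a t) (b t) (c t)) / (a t + b t + c t)
              = lamMinus (a t) (b t) (c t) / (a t + b t + c t) + 1
                + (α - 4) * (lamPlus (a t) (b t) (c t) / (a t + b t + c t)) := by
            field_simp
            ring
          rw [e0, et, lamMinus_div hu0, lamMinus_div hut, lamPlus_div hu0, lamPlus_div hut]
          have q3 : (α - 5) * (Real.sqrt 2 / 3 * Real.sqrt ((3 * ((a 0)^2 + (b 0)^2 + (c 0)^2)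
                - (a 0 + b 0 + c 0)^2) / (a 0 + b 0 + c 0)^2))
              ≤ (α - 5) * (Real.sqrt 2 / 3 * Real.sqrt ((3 * ((a t)^2 + (b t)^2 + (c t)^2)
                - (a t + b t + c t)^2) / (a t + b t + c t)^2)) :=
            mul_le_mul_of_nonpos_left q2 (by linarith)
          linarith [q3]
  have h1 : 2 * γ ≤ fAlpha α (a 0) (b 0) (c 0) / (a 0 + b 0 + c 0) :=
    (le_div_iff₀ hu0).mpr (by linarith)
  have h2 : 2 * γ ≤ fAlpha α (a t) (b t) (c t) / (a t + b t + c t) := h1.trans key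
  have h3 := (le_div_iff₀ hut).mp h2
  linarith
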